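/- For every l₀ with 0 < l₀ < 2π there exists a positive constant ρ = ρ(l₀) such that for every spherical triangle △(x,y,z) in the round unit sphere 𝕊² with side lengths |y,z| ≤ π/2 and |x,y| ≤ l₀/2 and with angle ∠_y(x,z) ≥ π/2 at y, one has |x,y| ≤ |x,z| + |z,y| − ρ·|z,y|. -/

import Mathlib

open Set Metric Filter
open scoped ENNReal NNReal

noncomputable section

universe u v

namespace Paper

/-! ### Singular homology (ambient version):
For subsets `S ⊆ T` of a topological space `X`, `SH n T S` is the `n`-th relative singular
homology group (with `ℤ` coefficients) of the pair of subspaces `(T, S)`; this is implemented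
inside the singular chain complex of `X`, using that singular simplices of the subspace `T`
correspond exactly to singular simplices of `X` with range inside `T`. -/

/-- The topological simplex, as in the older Mathlib (`ℝ≥0`-valued functions summing to `1`). -/
def SimplexCategory.toTopObj (x : _root_.SimplexCategory) : Set (Fin (x.len + 1) → ℝ≥0) :=
  {f | ∑ i, f i = 1}

/-- The map of topological simplices induced by a morphism, as in the older Mathlib. -/
def SimplexCategory.toTopMap {x y : _root_.SimplexCategory} (f : x ⟶ y)
    (g : SimplexCategory.toTopObj x) : SimplexCategory.toTopObj y :=
  ⟨fun i => ∑ j ∈ Finset.univ.filter (fun j => f.toOrderHom j = i), g.1 j, by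
    simp only [SimplexCategory.toTopObj, Set.mem_setOf_eq]
    rw [← Finset.sum_biUnion]
    · have hg : ∑ i, g.1 i = 1 := g.2
      convert hg
      simp [Finset.eq_univ_iff_forall]
    · apply Set.pairwiseDisjoint_filter⟩

theorem SimplexCategory.continuous_toTopMap {x y : _root_.SimplexCategory} (f : x ⟶ y) :
    Continuous (SimplexCategory.toTopMap f) := by
  refine Continuous.subtype_mk (continuous_pi fun i => ?_) _
  exact continuous_finset_sum _ (fun j _ => (continuous_apply _).comp continuous_subtype_val)

/-- The topological standard `n`-simplex. -/
abbrev Δtop (n : ℕ) : Type := ↥(SimplexCategory.toTopObj (SimplexCategory.mk n))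

/-- The group of singular `n`-chains of `X` (with integer coefficients). -/
abbrev SChain (n : ℕ) (X : Type u) [TopologicalSpace X] : Type u :=
  FreeAbelianGroup C(Δtop n, X)

/-- The `i`-th face inclusion of the standard simplices. -/
def faceMap (n : ℕ) (i : Fin (n + 2)) : C(Δtop n, Δtop (n + 1)) :=
  ⟨SimplexCategory.toTopMap (SimplexCategory.δ i), SimplexCategory.continuous_toTopMap _⟩

/-- The singular boundary operator. -/
def bnd {X : Type u} [TopologicalSpace X] (n : ℕ) : SChain (n + 1) X →+ SChain n X :=
  FreeAbelianGroup.lift fun σ : C(Δtop (n + 1), X) =>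
    ∑ i : Fin (n + 2), ((-1 : ℤ) ^ (i : ℕ)) • FreeAbelianGroup.of (σ.comp (faceMap n i))

/-- The subgroup of `n`-chains supported in a subset `S ⊆ X`. -/
def chainsIn {X : Type u} [TopologicalSpace X] (n : ℕ) (S : Set X) :
    AddSubgroup (SChain n X) :=
  AddSubgroup.closure {c | ∃ σ : C(Δtop n, X), Set.range σ ⊆ S ∧ c = FreeAbelianGroup.of σ}

/-- Relative cycles of the pair `(T, S)`. -/
def relCyc {X : Type u} [TopologicalSpace X] : (n : ℕ) → (T S : Set X) → AddSubgroup (SChain n X)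
  | 0, T, _ => chainsIn 0 T
  | (m + 1), T, S => chainsIn (m + 1) T ⊓ (chainsIn m S).comap (bnd m)

/-- Relative boundaries of the pair `(T, S)`. -/
def relBdry {X : Type u} [TopologicalSpace X] (n : ℕ) (T S : Set X) :
    AddSubgroup (SChain n X) :=
  (chainsIn (n + 1) T).map (bnd n) ⊔ chainsIn n S

/-- Relative singular homology `H_n(T, S; ℤ)` of a pair of subspaces `S ⊆ T ⊆ X`.
The absolute homology of the subspace `T` is `SH n T ∅`. -/
abbrev SH {X : Type u} [TopologicalSpace X] (n : ℕ) (T S : Set X) : Type u :=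
  ↥(relCyc n T S) ⧸ (relBdry n T S).comap (relCyc n T S).subtype

/-- The class in relative homology represented by a relative cycle. -/
def SHmk {X : Type u} [TopologicalSpace X] {n : ℕ} {T S : Set X} :
    ↥(relCyc n T S) →+ SH n T S :=
  QuotientAddGroup.mk' _

lemma chainsIn_mono {X : Type u} [TopologicalSpace X] (n : ℕ) {S S' : Set X} (h : S ⊆ S') :
    chainsIn n S ≤ chainsIn n S' :=
  AddSubgroup.closure_mono (by rintro c ⟨σ, hσ, rfl⟩; exact ⟨σ, hσ.trans h, rfl⟩)

lemma relCyc_mono {X : Type u} [TopologicalSpace X] {n : ℕ} {T T' S S' : Set X}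
    (hT : T ⊆ T') (hS : S ⊆ S') : relCyc n T S ≤ relCyc n T' S' := by
  cases n with
  | zero => exact chainsIn_mono 0 hT
  | succ m =>
      exact inf_le_inf (chainsIn_mono _ hT) (AddSubgroup.comap_mono (chainsIn_mono _ hS))

lemma relBdry_mono {X : Type u} [TopologicalSpace X] {n : ℕ} {T T' S S' : Set X}
    (hT : T ⊆ T') (hS : S ⊆ S') : relBdry n T S ≤ relBdry n T' S' :=
  sup_le_sup (AddSubgroup.map_mono (chainsIn_mono _ hT)) (chainsIn_mono _ hS)

/-- The map on relative homology induced by an inclusion of pairs `(T, S) ⊆ (T', S')`. -/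
def SHmap {X : Type u} [TopologicalSpace X] {n : ℕ} {T T' S S' : Set X}
    (hT : T ⊆ T') (hS : S ⊆ S') : SH n T S →+ SH n T' S' :=
  QuotientAddGroup.map _ _ (AddSubgroup.inclusion (relCyc_mono hT hS)) (by
    intro x hx
    simp only [AddSubgroup.mem_comap, AddSubgroup.coe_subtype, AddSubgroup.coe_inclusion] at hx ⊢
    exact relBdry_mono hT hS hx)

/-- An element generating the ambient group. -/
def IsGenerator {G : Type v} [AddGroup G] (g : G) : Prop :=
  AddSubgroup.zmultiples g = ⊤

/-- The support of a relative homology class `α ∈ H_n(X, S)`: the set of points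
`x ∈ X \ S` such that the image of `α` in `H_n(X, X \ {x})` is nonzero. -/
def spt {X : Type u} [TopologicalSpace X] {n : ℕ} {S : Set X}
    (α : SH n (Set.univ : Set X) S) : Set X :=
  {x | x ∉ S ∧ ∀ h : S ⊆ (Set.univ : Set X) \ {x}, SHmap (subset_refl _) h α ≠ 0}

/-- `Connects α β` says that the connecting homomorphism
`∂ : H_{m+1}(T, S) → H_m(S)` of the pair `(T, S)` sends `α` to `β`. -/
def Connects {X : Type u} [TopologicalSpace X] {m : ℕ} {T S : Set X}
    (α : SH (m + 1) T S) (β : SH m S (∅ : Set X)) : Prop :=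
  ∃ (c : relCyc (m + 1) T S) (b : relCyc m S (∅ : Set X)),
    (b : SChain m X) = bnd m (c : SChain (m + 1) X) ∧ SHmk c = α ∧ SHmk b = β

/-- The homological dimension of a topological space: the supremum of all `n` such that
`H_n(U, V) ≠ 0` for some open pair `V ⊆ U`. -/
def homDim (X : Type u) [TopologicalSpace X] : ℕ∞ :=
  ⨆ (n : ℕ) (_ : ∃ U V : Set X, IsOpen U ∧ IsOpen V ∧ V ⊆ U ∧ ∃ α : SH n U V, α ≠ 0),
    (n : ℕ∞)



/-! ### Metric geometry: lengths, geodesics, CAT(κ) -/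

/-- The length (one-dimensional Hausdorff measure) of a subset of a metric space. -/
def len {Z : Type v} [EMetricSpace Z] (E : Set Z) : ℝ≥0∞ :=
  letI : MeasurableSpace Z := borel Z
  haveI : BorelSpace Z := ⟨rfl⟩
  MeasureTheory.Measure.hausdorffMeasure 1 E

/-- The diameter `D_κ` of the model surface `M²_κ`. -/
def Dk (κ : ℝ) : ℝ≥0∞ :=
  if κ ≤ 0 then ⊤ else ENNReal.ofReal (Real.pi / Real.sqrt κ)

/-- Inverse hyperbolic cosine. -/
def acosh (x : ℝ) : ℝ := Real.log (x + Real.sqrt (x ^ 2 - 1))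

/-- `mdl κ a b θ` is the distance, in the model surface `M²_κ` of constant curvature `κ`,
between two points having distances `a` and `b` from a base point, the two sides enclosing
the angle `θ` there (law of cosines in constant curvature `κ`). -/
def mdl (κ a b θ : ℝ) : ℝ :=
  if κ = 0 then Real.sqrt (a ^ 2 + b ^ 2 - 2 * a * b * Real.cos θ)
  else if 0 < κ then
    (1 / Real.sqrt κ) *
      Real.arccos (Real.cos (Real.sqrt κ * a) * Real.cos (Real.sqrt κ * b) +
        Real.sin (Real.sqrt κ * a) * Real.sin (Real.sqrt κ * b) * Real.cos θ)
  else
    (1 / Real.sqrt (-κ)) *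
      acosh (Real.cosh (Real.sqrt (-κ) * a) * Real.cosh (Real.sqrt (-κ) * b) -
        Real.sinh (Real.sqrt (-κ) * a) * Real.sinh (Real.sqrt (-κ) * b) * Real.cos θ)

/-- `cmpAngle κ a b c` is the angle of the comparison triangle in the model surface `M²_κ`
at the vertex whose adjacent sides have lengths `b`, `c` and whose opposite side has
length `a`. -/
def cmpAngle (κ a b c : ℝ) : ℝ :=
  if κ = 0 then Real.arccos ((b ^ 2 + c ^ 2 - a ^ 2) / (2 * b * c))
  else if 0 < κ then
    Real.arccos ((Real.cos (Real.sqrt κ * a) -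
        Real.cos (Real.sqrt κ * b) * Real.cos (Real.sqrt κ * c)) /
      (Real.sin (Real.sqrt κ * b) * Real.sin (Real.sqrt κ * c)))
  else
    Real.arccos ((Real.cosh (Real.sqrt (-κ) * b) * Real.cosh (Real.sqrt (-κ) * c) -
        Real.cosh (Real.sqrt (-κ) * a)) /
      (Real.sinh (Real.sqrt (-κ) * b) * Real.sinh (Real.sqrt (-κ) * c)))

/-- `γ` restricted to `[a, b]` is a unit-speed geodesic (an isometric embedding of the
interval). -/
def GeodOn {X : Type u} [MetricSpace X] (γ : ℝ → X) (a b : ℝ) : Prop :=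
  ∀ s ∈ Set.Icc a b, ∀ t ∈ Set.Icc a b, dist (γ s) (γ t) = |s - t|

/-- `γ` is a unit-speed geodesic from `x` to `y` (parametrized on `[0, dist x y]`). -/
def GeodFromTo {X : Type u} [MetricSpace X] (γ : ℝ → X) (x y : X) : Prop :=
  γ 0 = x ∧ γ (dist x y) = y ∧ GeodOn γ 0 (dist x y)

/-- A complete metric space is CAT(κ) if points at distance `< D_κ` are joined by geodesics
and all geodesic triangles of perimeter `< 2 D_κ` satisfy the comparison inequality with the
model surface `M²_κ`: the distance from a vertex to a point on the opposite side is at most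
the corresponding distance in the comparison triangle. -/
structure IsCAT (κ : ℝ) (X : Type u) [MetricSpace X] : Prop where
  complete : CompleteSpace X
  geod : ∀ x y : X, ENNReal.ofReal (dist x y) < Dk κ → ∃ γ : ℝ → X, GeodFromTo γ x y
  cmp : ∀ (x y z : X) (γ : ℝ → X), GeodFromTo γ y z →
    ENNReal.ofReal (dist x y + dist y z + dist z x) < 2 * Dk κ →
    ∀ t ∈ Set.Icc 0 (dist y z),
      dist x (γ t) ≤ mdl κ (dist x y) t (cmpAngle κ (dist x z) (dist x y) (dist y z))

/-- A metric space has curvature bounded above by `κ` if every point has a neighborhood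
which is CAT(κ) (with the induced metric). -/
def CurvBddAbove (κ : ℝ) (X : Type u) [MetricSpace X] : Prop :=
  ∀ x : X, ∃ U : Set X, U ∈ nhds x ∧ IsCAT κ ↥U

/-- The set of lengths of curves inside `A` joining `x` to `y`. -/
def pathLengths {X : Type u} [MetricSpace X] (A : Set X) (x y : X) : Set ℝ≥0∞ :=
  {l | ∃ γ : ℝ → X, ContinuousOn γ (Set.Icc 0 1) ∧ γ 0 = x ∧ γ 1 = y ∧
    Set.MapsTo γ (Set.Icc 0 1) A ∧ l = eVariationOn γ (Set.Icc 0 1)}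

/-- A subset is Lipschitz connected if any two of its points are joined by a curve of
finite length inside the subset. -/
def LipConnected {X : Type u} [MetricSpace X] (A : Set X) : Prop :=
  ∀ x ∈ A, ∀ y ∈ A, ∃ l ∈ pathLengths A x y, l ≠ ⊤

/-- The distance function of an explicitly given metric space structure. -/
def mdist {A : Type v} (dA : MetricSpace A) (x y : A) : ℝ :=
  @dist A dA.toPseudoMetricSpace.toDist x y

/-- The topology of an explicitly given metric space structure. -/
def mtop {A : Type v} (dA : MetricSpace A) : TopologicalSpace A :=
  dA.toPseudoMetricSpace.toUniformSpace.toTopologicalSpace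

/-- `dA` is the intrinsic metric on the subset `A` induced by the ambient metric:
the distance between two points is the infimum of the lengths of curves in `A`
joining them. -/
def IsIntrinsicMetricOn {X : Type u} [MetricSpace X] (A : Set X) (dA : MetricSpace ↥A) : Prop :=
  ∀ x y : ↥A, ENNReal.ofReal (mdist dA x y) = sInf (pathLengths A (↑x) (↑y))

/-- The unit sphere `𝕊ⁿ ⊆ ℝⁿ⁺¹`. -/
def sphereSet (n : ℕ) : Set (EuclideanSpace ℝ (Fin (n + 1))) := Metric.sphere 0 1

/-- The closed unit ball `Bⁿ⁺¹ ⊆ ℝⁿ⁺¹`. -/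
def ballSet (n : ℕ) : Set (EuclideanSpace ℝ (Fin (n + 1))) := Metric.closedBall 0 1

/-- The inclusion `𝕊ⁿ ⊆ Bⁿ⁺¹`. -/
def sphereIncl (n : ℕ) (z : ↥(sphereSet n)) : ↥(ballSet n) :=
  ⟨z.1, Metric.sphere_subset_closedBall z.2⟩

/-- A space is aspherical if all homotopy groups `π_n`, `n ≥ 2`, vanish; equivalently,
every continuous map from the `n`-sphere extends continuously to the `(n+1)`-ball. -/
def Aspherical (Z : Type v) [TopologicalSpace Z] : Prop :=
  ∀ n : ℕ, 2 ≤ n → ∀ f : C(↥(sphereSet n), Z), ∃ F : C(↥(ballSet n), Z),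
    ∀ z : ↥(sphereSet n), F (sphereIncl n z) = f z

/-- The unit circle in `ℂ`. -/
def circleSet : Set ℂ := Metric.sphere 0 1

/-- The closed unit disc in `ℂ`. -/
def discSet : Set ℂ := Metric.closedBall 0 1

/-- A Jordan curve: a subset homeomorphic to the circle. -/
def IsJordan {Z : Type v} [TopologicalSpace Z] (Γ : Set Z) : Prop :=
  Nonempty (↥Γ ≃ₜ ↥circleSet)

/-- An arc: a subset homeomorphic to a compact interval. -/
def IsArc {Z : Type v} [TopologicalSpace Z] (A : Set Z) : Prop :=
  Nonempty (↥A ≃ₜ ↥(Set.Icc (0 : ℝ) 1))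

/-- A subset `A ⊆ X` is locally simply connected: every relative neighborhood of a point of
`A` contains a smaller one in which every loop can be contracted (within the bigger one). -/
def LocSimplyConnected {X : Type u} [MetricSpace X] (A : Set X) : Prop :=
  ∀ a ∈ A, ∀ U ∈ nhdsWithin a A, ∃ V ∈ nhdsWithin a A, V ⊆ U ∧
    ∀ f : C(↥circleSet, X), Set.range f ⊆ V ∩ A →
      ∃ F : C(↥discSet, X), Set.range F ⊆ U ∩ A ∧
        ∀ z : ↥circleSet, F ⟨z.1, Metric.sphere_subset_closedBall z.2⟩ = f z


/-! ### Jordan curves, interiors, cuts, majorization -/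

/-- `S` is the interior of the Jordan curve `Γ` in `X`: the support of the (unique) relative
homology class `α ∈ H₂(X, Γ)` whose boundary `∂α` is a generator `[Γ]` of `H₁(Γ)`. -/
def IsJInterior {X : Type u} [MetricSpace X] (Γ S : Set X) : Prop :=
  ∃ g : SH 1 Γ (∅ : Set X), IsGenerator g ∧
    ∃ α : SH 2 (Set.univ : Set X) Γ, Connects α g ∧ S = spt α

/-- `c` is a cut of the Jordan curve `Γ` with interior `S`: a geodesic segment contained in
`closure S` meeting `Γ` exactly in its two endpoints; `f`, `L` are its arclength
parametrization and length. -/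
def IsCutSeg {X : Type u} [MetricSpace X] (Γ S c : Set X) (f : ℝ → X) (L : ℝ) : Prop :=
  0 < L ∧ GeodOn f 0 L ∧ c = f '' Set.Icc 0 L ∧ c ⊆ closure S ∧ c ∩ Γ = {f 0, f L}

/-- `CutsInto Γ c Γp Γm`: `c` is a cut of the Jordan curve `Γ` subdividing it into the
two Jordan curves `Γp = Γ⁺ ∪ c` and `Γm = Γ⁻ ∪ c`, where `Γ⁺`, `Γ⁻` are the two arcs
of `Γ` determined by the endpoints of `c`. -/
def CutsInto {X : Type u} [MetricSpace X] (Γ c Γp Γm : Set X) : Prop :=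
  ∃ (S : Set X) (f : ℝ → X) (L : ℝ), IsJInterior Γ S ∧ IsCutSeg Γ S c f L ∧
    ∃ A B : Set X, IsArc A ∧ IsArc B ∧ A ∪ B = Γ ∧ A ∩ B = {f 0, f L} ∧
      Γp = A ∪ c ∧ Γm = B ∪ c

/-- A `k`-fold iterated cut of `Γ`, organized along the complete binary tree of words of
length `≤ k`: `C w` is the Jordan curve at node `w` and `cseg w` is the cut applied to it;
the `2^k` resulting Jordan curves are the `C w` with `w.length = k`. -/
def IsIterCut {X : Type u} [MetricSpace X] (k : ℕ) (Γ : Set X)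
    (C : List Bool → Set X) (cseg : List Bool → Set X) : Prop :=
  C [] = Γ ∧ ∀ w : List Bool, w.length < k →
    CutsInto (C w) (cseg w) (C (w ++ [false])) (C (w ++ [true]))

/-- The Jordan curve `Γ` (of length `l`, with interior `S`) is `ε`-degenerated:
every cut of `Γ` has length `< 2 ε l`. -/
def Degenerate {X : Type u} [MetricSpace X] (Γ S : Set X) (ε l : ℝ) : Prop :=
  ∀ (c : Set X) (f : ℝ → X) (L : ℝ), IsCutSeg Γ S c f L → L < 2 * ε * l

/-- `f : Y → X` is a majorization of the rectifiable Jordan curve `Γ ⊆ X`: a `1`-Lipschitz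
map sending some Jordan curve `Γ' ⊆ Y` bijectively and in an arc length preserving way
onto `Γ`. -/
def Majorizes {Y : Type v} {X : Type u} [MetricSpace Y] [MetricSpace X]
    (f : Y → X) (Γ : Set X) : Prop :=
  LipschitzWith 1 f ∧ ∃ Γ' : Set Y, IsJordan Γ' ∧ Set.InjOn f Γ' ∧ f '' Γ' = Γ ∧
    ∀ E : Set Y, E ⊆ Γ' → len (f '' E) = len E

/-! ### The model surfaces `M²_κ` -/

/-- `γ` is a local geodesic (defined on all of `ℝ`). -/
def IsLocalGeod {X : Type u} [MetricSpace X] (γ : ℝ → X) : Prop :=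
  ∀ t : ℝ, ∃ ε > 0, GeodOn γ (t - ε) (t + ε)

/-- Curvature bounded below by `κ` locally, in the (reversed) triangle comparison sense. -/
def IsCBBLocal (κ : ℝ) (X : Type u) [MetricSpace X] : Prop :=
  ∀ p : X, ∃ U ∈ nhds p, ∀ (x y z : X) (γ : ℝ → X), x ∈ U → y ∈ U → z ∈ U →
    GeodFromTo γ y z → (∀ t ∈ Set.Icc 0 (dist y z), γ t ∈ U) →
    ENNReal.ofReal (dist x y + dist y z + dist z x) < 2 * Dk κ →
    ∀ t ∈ Set.Icc 0 (dist y z),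
      mdl κ (dist x y) t (cmpAngle κ (dist x z) (dist x y) (dist y z)) ≤ dist x (γ t)

/-- A characterization of the model surface `M²_κ`: a complete, proper, simply connected,
geodesically complete two-dimensional space of constant curvature `κ` (curvature both
bounded above and below by `κ`). -/
structure IsModelSurface (κ : ℝ) (M : Type u) [MetricSpace M] : Prop where
  cat : IsCAT κ M
  lower : IsCBBLocal κ M
  dim : homDim M = 2
  simpConn : SimplyConnectedSpace M
  proper : ProperSpace M
  geodComplete : ∀ x y : M, x ≠ y → ∃ γ : ℝ → M, IsLocalGeod γ ∧ GeodFromTo γ x y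

/-- A geodesically convex subset. -/
def GeodConvex {M : Type u} [MetricSpace M] (C : Set M) : Prop :=
  ∀ x ∈ C, ∀ y ∈ C, ∃ γ : ℝ → M, GeodFromTo γ x y ∧ ∀ t ∈ Set.Icc 0 (dist x y), γ t ∈ C

/-- `Γ` is majorized by a closed (geodesically) convex subset of the model surface `M²_κ`,
with the image of the majorization contained in `N ⊆ X`. -/
def MajorizedByConvexModel (κ : ℝ) {X : Type u} [MetricSpace X] (Γ N : Set X) : Prop :=
  ∃ (M : Type u) (dM : MetricSpace M), @IsModelSurface κ M dM ∧
    ∃ Cs : Set M, @IsClosed M (mtop dM) Cs ∧ @GeodConvex M dM Cs ∧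
      ∃ f : ↥Cs → X, @Majorizes ↥Cs X (@Subtype.metricSpace M _ dM) _ f Γ ∧
        Set.range f ⊆ N

/-! ### Directions and angles -/

/-- The Alexandrov upper angle between two unit-speed geodesics emanating from a common
point (`γ₁ 0 = γ₂ 0`): the limsup of Euclidean comparison angles. -/
def upperAngle {X : Type u} [MetricSpace X] (γ₁ γ₂ : ℝ → X) : ℝ :=
  Filter.limsup (fun st : ℝ × ℝ => cmpAngle 0 (dist (γ₁ st.1) (γ₂ st.2)) st.1 st.2)
    ((nhdsWithin 0 (Set.Ioi 0)) ×ˢ (nhdsWithin 0 (Set.Ioi 0)))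

/-- The geodesics emanating from `p` whose image is contained in `S`; these represent the
space of directions `Σ_p S ⊆ Σ_p X`. -/
def GeodDirsIn {X : Type u} [MetricSpace X] (p : X) (S : Set X) : Set (ℝ → X) :=
  {γ | ∃ L : ℝ, 0 < L ∧ GeodOn γ 0 L ∧ γ 0 = p ∧ γ '' Set.Icc 0 L ⊆ S}

/-! ### Spherical geometry -/

/-- The spherical (angular) distance between two unit vectors of `ℝ³`. -/
def sdist (x y : EuclideanSpace ℝ (Fin 3)) : ℝ := Real.arccos (inner ℝ x y)

/-- The spherical angle `∠_y(x, z)` at the vertex `y` of the spherical triangle `(x, y, z)`: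
the angle between the projections of `x` and `z` to the tangent plane of the unit sphere
at `y`. -/
def sangle (y x z : EuclideanSpace ℝ (Fin 3)) : ℝ :=
  InnerProductGeometry.angle (x - (inner ℝ x y : ℝ) • y) (z - (inner ℝ z y : ℝ) • y)

/-! ### Manifolds, fundamental classes -/

/-- `M ⊆ X` is a locally Euclidean `m`-manifold (with the subspace topology). -/
def LocallyEuclidean (m : ℕ) {X : Type u} [TopologicalSpace X] (M : Set X) : Prop :=
  ∀ x : ↥M, ∃ U : Set ↥M, IsOpen U ∧ x ∈ U ∧
    Nonempty (↥U ≃ₜ EuclideanSpace ℝ (Fin m))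

/-- `μ ∈ H_m(M)` is a fundamental class of the compact oriented `m`-manifold `M`:
its image in each local homology group `H_m(M, M \ {x})` is a generator. -/
def IsFundClass {X : Type u} [TopologicalSpace X] {m : ℕ} {M : Set X}
    (μ : SH m M (∅ : Set X)) : Prop :=
  ∀ x, x ∈ M → IsGenerator (SHmap (subset_refl M) (Set.empty_subset _) μ : SH m M (M \ {x}))

/-! ### Asymptotic cones -/

/-- `C` is an asymptotic cone of `X`: an ultralimit of rescalings `(X, dist / s_k, p_k)`
along a nonprincipal ultrafilter, where `s_k → ∞`. -/
def IsAsympCone (X : Type u) [MetricSpace X] (C : Type u) [MetricSpace C] : Prop :=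
  ∃ ω : Ultrafilter ℕ, (∀ s : Set ℕ, s.Finite → s ∉ ω) ∧
    ∃ s : ℕ → ℝ, (∀ k, 0 < s k) ∧ Filter.Tendsto s Filter.atTop Filter.atTop ∧
      ∃ p : ℕ → X,
        ∃ Φ : {u : ℕ → X // ∃ B : ℝ, ∀ k, dist (u k) (p k) ≤ B * s k} → C,
          Function.Surjective Φ ∧
            ∀ u v, Filter.Tendsto (fun k => dist (u.1 k) (v.1 k) / s k) ω
              (nhds (dist (Φ u) (Φ v)))



/-- `w : Z → X` exhibits the CAT(κ) disc `Z` as a majorization of the Jordan curve `Γ`,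
restricting to an arc length preserving homeomorphism from the boundary circle `∂Z`
of the disc onto `Γ`. -/
def IsDiscMajorization (κ : ℝ) {X : Type u} [MetricSpace X] (Γ : Set X)
    (Z : Type u) [MetricSpace Z] (w : Z → X) : Prop :=
  IsCAT κ Z ∧ ∃ ψ : Z ≃ₜ ↥discSet,
    LipschitzWith 1 w ∧
    Set.InjOn w (ψ ⁻¹' {z : ↥discSet | (z : ℂ) ∈ circleSet}) ∧
    w '' (ψ ⁻¹' {z : ↥discSet | (z : ℂ) ∈ circleSet}) = Γ ∧
    ∀ E : Set Z, E ⊆ ψ ⁻¹' {z : ↥discSet | (z : ℂ) ∈ circleSet} →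
      len (w '' E) = len E

end Paper

open Paper
lemma myaux (s ρ a b c : ℝ) (hs : 0 < s) (hρ : 0 < ρ) (hρ1 : ρ < 1)
    (hk : s * (2 / Real.pi) * (1 - ρ) = ρ)
    (ha0 : 0 ≤ a) (haπ : a ≤ Real.pi)
    (hsa : Real.pi / 2 ≤ a → s ≤ Real.sin a)
    (hb0 : 0 ≤ b) (hb : b ≤ Real.pi / 2)
    (hc0 : 0 ≤ c) (hcπ : c ≤ Real.pi)
    (hcos : Real.cos c ≤ Real.cos a * Real.cos b) :
    a ≤ c + b - ρ * b := by
  have hπ : (0:ℝ) < Real.pi := Real.pi_pos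
  have hgoal : c + b - ρ * b = c + (1 - ρ) * b := by ring
  rw [hgoal]
  by_cases hat : a ≤ (1 - ρ) * b
  · nlinarith
  push_neg at hat
  have htb0 : 0 ≤ (1 - ρ) * b := by nlinarith
  have htbb : (1 - ρ) * b ≤ b := by nlinarith
  have h1 : a - (1 - ρ) * b ≤ Real.pi := by linarith
  have h0' : 0 ≤ a - (1 - ρ) * b := by linarith
  suffices h : a - (1 - ρ) * b ≤ c by linarith
  by_contra hlt
  push_neg at hlt
  have hkey : Real.cos a * Real.cos b ≤ Real.cos (a - (1 - ρ) * b) := by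
    have hctb : Real.cos b ≤ Real.cos ((1 - ρ) * b) :=
      Real.cos_le_cos_of_nonneg_of_le_pi htb0 (by linarith) htbb
    have hsintb : 0 ≤ Real.sin ((1 - ρ) * b) :=
      Real.sin_nonneg_of_nonneg_of_le_pi htb0 (by linarith)
    have hsina : 0 ≤ Real.sin a := Real.sin_nonneg_of_nonneg_of_le_pi ha0 haπ
    rw [Real.cos_sub]
    by_cases hca : 0 ≤ Real.cos a
    · nlinarith [mul_nonneg hsina hsintb]
    · push_neg at hca
      have ha2 : Real.pi / 2 ≤ a := by
        by_contra h
        push_neg at h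
        exact absurd (Real.cos_nonneg_of_mem_Icc ⟨by linarith, le_of_lt h⟩) (not_le.mpr hca)
      have hsa' := hsa ha2
      have hjordan : 2 / Real.pi * ((1 - ρ) * b) ≤ Real.sin ((1 - ρ) * b) :=
        Real.mul_le_sin htb0 (by nlinarith)
      have hlip : Real.cos ((1 - ρ) * b) - Real.cos b ≤ b - (1 - ρ) * b := by
        have hid := Real.cos_sub_cos ((1 - ρ) * b) b
        have harg : ((1 - ρ) * b - b) / 2 = -((b - (1 - ρ) * b) / 2) := by ring
        rw [harg, Real.sin_neg] at hid
        have hA0 : 0 ≤ Real.sin (((1 - ρ) * b + b) / 2) :=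
          Real.sin_nonneg_of_nonneg_of_le_pi (by linarith) (by linarith)
        have hA1 : Real.sin (((1 - ρ) * b + b) / 2) ≤ 1 := Real.sin_le_one _
        have hB0 : 0 ≤ Real.sin ((b - (1 - ρ) * b) / 2) :=
          Real.sin_nonneg_of_nonneg_of_le_pi (by linarith) (by linarith)
        have hB1 : Real.sin ((b - (1 - ρ) * b) / 2) ≤ (b - (1 - ρ) * b) / 2 :=
          Real.sin_le (by linarith)
        nlinarith [mul_nonneg (by linarith : (0:ℝ) ≤ 1 - Real.sin (((1 - ρ) * b + b) / 2)) hB0]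
      have hca1 : -1 ≤ Real.cos a := Real.neg_one_le_cos a
      have hkb : s * (2 / Real.pi) * (1 - ρ) * b = ρ * b := by rw [hk]
      nlinarith [mul_nonneg (by linarith : (0:ℝ) ≤ Real.cos a + 1)
          (by linarith : (0:ℝ) ≤ Real.cos ((1-ρ)*b) - Real.cos b),
        mul_nonneg (by linarith : (0:ℝ) ≤ Real.sin a - s) hsintb,
        mul_le_mul_of_nonneg_left hjordan hs.le]
  have := Real.cos_lt_cos_of_nonneg_of_le_pi hc0 h1 hlt
  linarith

set_option maxHeartbeats 1000000 in
/-- For every `0 < l₀ < 2π` there is a constant `ρ = ρ(l₀) > 0` such that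
every spherical triangle `(x, y, z)` on the unit sphere `𝕊²` with `|y,z| ≤ π/2`,
`|x,y| ≤ l₀/2` and angle `∠_y(x,z) ≥ π/2` satisfies
`|x,y| ≤ |x,z| + |z,y| − ρ |z,y|`. -/
theorem statement15 (l₀ : ℝ) (hl₀ : 0 < l₀) (hl₀' : l₀ < 2 * Real.pi) :
    ∃ ρ : ℝ, 0 < ρ ∧
      ∀ x y z : EuclideanSpace ℝ (Fin 3), ‖x‖ = 1 → ‖y‖ = 1 → ‖z‖ = 1 →
        sdist y z ≤ Real.pi / 2 → sdist x y ≤ l₀ / 2 → Real.pi / 2 ≤ sangle y x z →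
        sdist x y ≤ sdist x z + sdist z y - ρ * sdist z y := by
  have hπ : (0:ℝ) < Real.pi := Real.pi_pos
  have hl2 : 0 < l₀ / 2 := by linarith
  have hl2' : l₀ / 2 < Real.pi := by linarith
  set s := Real.sin (l₀ / 2) with hsdef
  have hs : 0 < s := Real.sin_pos_of_pos_of_lt_pi hl2 hl2'
  set k := 2 * s / Real.pi with hkdef
  have hk0 : 0 < k := by positivity
  refine ⟨k / (1 + k), by positivity, ?_⟩
  set ρ := k / (1 + k) with hρdef
  have hρ : 0 < ρ := by positivity
  have hρ1 : ρ < 1 := by rw [hρdef, div_lt_one (by linarith)]; linarith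
  have hk : s * (2 / Real.pi) * (1 - ρ) = ρ := by
    rw [hρdef, hkdef]
    field_simp
    ring
  intro x y z hx hy hz hbz hab hang
  have hyy : (inner ℝ y y : ℝ) = 1 := by
    rw [real_inner_self_eq_norm_mul_norm, hy]; norm_num
  have hzy_comm : (inner ℝ y z : ℝ) = (inner ℝ z y : ℝ) := real_inner_comm z y
  have hxy_comm : (inner ℝ y x : ℝ) = (inner ℝ x y : ℝ) := real_inner_comm x y
  have hp_abs : |(inner ℝ x y : ℝ)| ≤ 1 := by
    have := abs_real_inner_le_norm x y
    rwa [hx, hy, one_mul] at this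
  have hq_abs : |(inner ℝ z y : ℝ)| ≤ 1 := by
    have := abs_real_inner_le_norm z y
    rwa [hz, hy, one_mul] at this
  have hr_abs : |(inner ℝ x z : ℝ)| ≤ 1 := by
    have := abs_real_inner_le_norm x z
    rwa [hx, hz, one_mul] at this
  obtain ⟨hp_lb, hp_ub⟩ := abs_le.mp hp_abs
  obtain ⟨hq_lb, hq_ub⟩ := abs_le.mp hq_abs
  obtain ⟨hr_lb, hr_ub⟩ := abs_le.mp hr_abs
  have hbzy : sdist y z = sdist z y := by rw [sdist, sdist, hzy_comm]
  rw [hbzy] at hbz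
  -- exclude inner x y = -1 and inner z y = -1
  have hp_ne : (inner ℝ x y : ℝ) ≠ -1 := by
    intro h
    have : sdist x y = Real.pi := by rw [sdist, h, Real.arccos_neg_one]
    rw [this] at hab; linarith
  have hq_ne : (inner ℝ z y : ℝ) ≠ -1 := by
    intro h
    have : sdist z y = Real.pi := by rw [sdist, h, Real.arccos_neg_one]
    rw [this] at hbz; linarith
  by_cases hp1 : (inner ℝ x y : ℝ) = 1
  · -- x = y
    have hxy : x = y := by
      have h2 : ‖x - y‖ ^ 2 = 0 := by
        rw [norm_sub_sq_real, hx, hy, hp1]; ring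
      have h3 : ‖x - y‖ = 0 := by
        have := pow_eq_zero_iff (two_ne_zero).symm.symm |>.mp h2
        exact this
      rw [norm_eq_zero, sub_eq_zero] at h3
      exact h3
    subst hxy
    have h1 : sdist x x = 0 := by rw [sdist, hyy, Real.arccos_one]
    have h2 : sdist x z = sdist z x := by rw [sdist, sdist, real_inner_comm]
    have h3 : 0 ≤ sdist z x := Real.arccos_nonneg _
    rw [h1, h2]
    nlinarith
  by_cases hq1 : (inner ℝ z y : ℝ) = 1
  · have hzy : z = y := by
      have h2 : ‖z - y‖ ^ 2 = 0 := by
        rw [norm_sub_sq_real, hz, hy, hq1]; ring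
      have h3 : ‖z - y‖ = 0 := by
        have := pow_eq_zero_iff (two_ne_zero).symm.symm |>.mp h2
        exact this
      rw [norm_eq_zero, sub_eq_zero] at h3
      exact h3
    subst hzy
    have h1 : sdist z z = 0 := by rw [sdist, hyy, Real.arccos_one]
    rw [h1]
    linarith
  -- main case
  have hp_lt : (inner ℝ x y : ℝ) < 1 := lt_of_le_of_ne hp_ub hp1
  have hq_lt : (inner ℝ z y : ℝ) < 1 := lt_of_le_of_ne hq_ub hq1
  have hp_gt : -1 < (inner ℝ x y : ℝ) := lt_of_le_of_ne hp_lb (Ne.symm hp_ne)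
  have hq_gt : -1 < (inner ℝ z y : ℝ) := lt_of_le_of_ne hq_lb (Ne.symm hq_ne)
  set u : EuclideanSpace ℝ (Fin 3) := x - (inner ℝ x y : ℝ) • y with hudef
  set v : EuclideanSpace ℝ (Fin 3) := z - (inner ℝ z y : ℝ) • y with hvdef
  have hu2 : (inner ℝ u u : ℝ) = 1 - (inner ℝ x y : ℝ) ^ 2 := by
    rw [hudef]
    simp only [inner_sub_left, inner_sub_right, real_inner_smul_left, real_inner_smul_right,
      hyy, hxy_comm]
    rw [real_inner_self_eq_norm_mul_norm, hx]
    ring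
  have hv2 : (inner ℝ v v : ℝ) = 1 - (inner ℝ z y : ℝ) ^ 2 := by
    rw [hvdef]
    simp only [inner_sub_left, inner_sub_right, real_inner_smul_left, real_inner_smul_right,
      hyy, real_inner_comm y z]
    rw [real_inner_self_eq_norm_mul_norm, hz]
    ring
  have hune : u ≠ 0 := by
    intro h
    rw [h, inner_zero_left] at hu2
    have h4 : (inner ℝ x y : ℝ) ^ 2 < 1 := by
      have := (sq_lt_one_iff_abs_lt_one _).mpr (abs_lt.mpr ⟨hp_gt, hp_lt⟩)
      exact this
    linarith
  have hvne : v ≠ 0 := by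
    intro h
    rw [h, inner_zero_left] at hv2
    have h4 : (inner ℝ z y : ℝ) ^ 2 < 1 := by
      have := (sq_lt_one_iff_abs_lt_one _).mpr (abs_lt.mpr ⟨hq_gt, hq_lt⟩)
      exact this
    linarith
  have huv : (inner ℝ u v : ℝ) = (inner ℝ x z : ℝ) - (inner ℝ x y : ℝ) * (inner ℝ z y : ℝ) := by
    rw [hudef, hvdef]
    simp only [inner_sub_left, inner_sub_right, real_inner_smul_left, real_inner_smul_right,
      hyy, real_inner_comm y z, hxy_comm]
    ring
  have hsang : sangle y x z = InnerProductGeometry.angle u v := rfl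
  have hang0 : (inner ℝ u v : ℝ) ≤ 0 := by
    have h0 : Real.cos (sangle y x z) ≤ Real.cos (Real.pi / 2) :=
      Real.cos_le_cos_of_nonneg_of_le_pi (by positivity)
        (by rw [hsang]; exact InnerProductGeometry.angle_le_pi u v) hang
    rw [Real.cos_pi_div_two, hsang, InnerProductGeometry.cos_angle] at h0
    have hN : 0 < ‖u‖ * ‖v‖ := mul_pos (norm_pos_iff.mpr hune) (norm_pos_iff.mpr hvne)
    by_contra hpos
    push_neg at hpos
    have := div_pos hpos hN
    linarith
  have hcosineq : (inner ℝ x z : ℝ) ≤ (inner ℝ x y : ℝ) * (inner ℝ z y : ℝ) := by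
    rw [huv] at hang0; linarith
  -- apply the real analysis lemma
  have ha0 : 0 ≤ sdist x y := Real.arccos_nonneg _
  have haπ : sdist x y ≤ Real.pi := Real.arccos_le_pi _
  have hb0 : 0 ≤ sdist z y := Real.arccos_nonneg _
  have hc0 : 0 ≤ sdist x z := Real.arccos_nonneg _
  have hcπ : sdist x z ≤ Real.pi := Real.arccos_le_pi _
  have hcosa : Real.cos (sdist x y) = (inner ℝ x y : ℝ) := by
    rw [sdist, Real.cos_arccos hp_lb hp_ub]
  have hcosb : Real.cos (sdist z y) = (inner ℝ z y : ℝ) := by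
    rw [sdist, Real.cos_arccos hq_lb hq_ub]
  have hcosc : Real.cos (sdist x z) = (inner ℝ x z : ℝ) := by
    rw [sdist, Real.cos_arccos hr_lb hr_ub]
  have hsa : Real.pi / 2 ≤ sdist x y → s ≤ Real.sin (sdist x y) := by
    intro h2
    have e1 : Real.sin (sdist x y) = Real.cos (sdist x y - Real.pi / 2) := by
      rw [← Real.cos_neg, neg_sub, Real.cos_pi_div_two_sub]
    have e2 : s = Real.cos (l₀ / 2 - Real.pi / 2) := by
      rw [← Real.cos_neg, neg_sub, Real.cos_pi_div_two_sub, hsdef]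
    rw [e1, e2]
    exact Real.cos_le_cos_of_nonneg_of_le_pi (by linarith) (by linarith) (by linarith)
  have hcos : Real.cos (sdist x z) ≤ Real.cos (sdist x y) * Real.cos (sdist z y) := by
    rw [hcosa, hcosb, hcosc]; exact hcosineq
  exact myaux s ρ (sdist x y) (sdist z y) (sdist x z) hs hρ hρ1 hk ha0 haπ hsa hb0 hbz hc0 hcπ hcos
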